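/- Let L be a real N-block tridiagonal matrix with zero diagonal blocks and off-diagonal blocks −L_n^+ (size d(n)×d(n+1)) above and L_n^− (size d(n+1)×d(n)) below. Suppose there exist invertible square matrices D_1,…,D_N with (D_{n+1}D_{n+1}^T) (L_n^+)^T = L_n^− (D_n D_n^T) for all n. Then A = D^{-1} L D, where D = diag(D_1,…,D_N), is anti-Hermitian (A^T = −A). -/

import Mathlib

open Matrix

variable {N : ℕ} {d : ℕ → ℕ}

/-- The vertex type of the block decomposition: block `n` (for `n : Fin N`) has
`d n` coordinates. -/
abbrev BlockIx (N : ℕ) (d : ℕ → ℕ) := Σ n : Fin N, Fin (d n)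

/-- The block tridiagonal matrix with zero diagonal blocks, blocks `−Lp n`
(of size `d(n) × d(n+1)`) above the diagonal and `Lm n` (of size
`d(n+1) × d(n)`) below the diagonal. -/
def blockTri (N : ℕ) (d : ℕ → ℕ)
    (Lp : ∀ n : ℕ, Matrix (Fin (d n)) (Fin (d (n + 1))) ℝ)
    (Lm : ∀ n : ℕ, Matrix (Fin (d (n + 1))) (Fin (d n)) ℝ) :
    Matrix (BlockIx N d) (BlockIx N d) ℝ := fun x y =>
  if h : (y.1 : ℕ) = (x.1 : ℕ) + 1 then
    -(Lp x.1 x.2 (Fin.cast (congrArg d h) y.2))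
  else if h' : (x.1 : ℕ) = (y.1 : ℕ) + 1 then
    Lm y.1 (Fin.cast (congrArg d h') x.2) y.2
  else 0

/-- The block diagonal matrix with diagonal blocks `D 0, D 1, …`. -/
def blockDiag' (N : ℕ) (d : ℕ → ℕ)
    (D : ∀ n : ℕ, Matrix (Fin (d n)) (Fin (d n)) ℝ) :
    Matrix (BlockIx N d) (BlockIx N d) ℝ := fun x y =>
  if h : (y.1 : ℕ) = (x.1 : ℕ) then
    D x.1 x.2 (Fin.cast (congrArg d h) y.2)
  else 0

theorem bd_same (D : ∀ n : ℕ, Matrix (Fin (d n)) (Fin (d n)) ℝ)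
    (x : BlockIx N d) (i : Fin (d x.1)) :
    _root_.blockDiag' N d D x ⟨x.1, i⟩ = D x.1 x.2 i := by
  simp [_root_.blockDiag']

theorem bd_same' (D : ∀ n : ℕ, Matrix (Fin (d n)) (Fin (d n)) ℝ)
    (y : BlockIx N d) (j : Fin (d y.1)) :
    _root_.blockDiag' N d D ⟨y.1, j⟩ y = D y.1 j y.2 := by
  simp [_root_.blockDiag']

theorem bd_ne (D : ∀ n : ℕ, Matrix (Fin (d n)) (Fin (d n)) ℝ)
    (x y : BlockIx N d) (h : y.1 ≠ x.1) :
    _root_.blockDiag' N d D x y = 0 := by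
  simp only [_root_.blockDiag']
  rw [dif_neg]
  exact fun h' => h (Fin.ext h')

theorem triple_apply (N : ℕ) (d : ℕ → ℕ)
    (M : Matrix (BlockIx N d) (BlockIx N d) ℝ)
    (D Dinv : ∀ n : ℕ, Matrix (Fin (d n)) (Fin (d n)) ℝ)
    (x y : BlockIx N d) :
    (blockDiag' N d Dinv * M * blockDiag' N d D) x y
      = ∑ j, (∑ i, Dinv x.1 x.2 i * M ⟨x.1, i⟩ ⟨y.1, j⟩) * D y.1 j y.2 := by
  rw [Matrix.mul_apply]
  rw [← Finset.univ_sigma_univ, Finset.sum_sigma]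
  rw [Finset.sum_eq_single y.1]
  · congr 1
    ext j
    congr 1
    · rw [Matrix.mul_apply, ← Finset.univ_sigma_univ, Finset.sum_sigma]
      rw [Finset.sum_eq_single x.1]
      · congr 1; ext i
        rw [bd_same]
      · intro n _ hn
        apply Finset.sum_eq_zero
        intro i _
        rw [bd_ne _ _ _ hn, zero_mul]
      · simp
    · rw [bd_same']
  · intro n _ hn
    apply Finset.sum_eq_zero
    intro j _
    rw [bd_ne _ _ _ (by simpa using hn.symm : (y.1 : Fin N) ≠ (⟨n, j⟩ : BlockIx N d).1), mul_zero]
  · simp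

/-- If `L` is block tridiagonal with zero diagonal blocks, off-diagonal blocks
`−Lp n` above and `Lm n` below, and there are invertible square matrices `Dn`
satisfying `(D_{n+1} D_{n+1}ᵀ) (Lp n)ᵀ = Lm n (D_n D_nᵀ)` for every relevant
`n`, then `A = D⁻¹ L D` with `D = diag(D_1, …, D_N)` is anti-Hermitian:
`Aᵀ = −A`. -/
theorem blockTri_antisymmetric (N : ℕ) (d : ℕ → ℕ)
    (Lp : ∀ n : ℕ, Matrix (Fin (d n)) (Fin (d (n + 1))) ℝ)
    (Lm : ∀ n : ℕ, Matrix (Fin (d (n + 1))) (Fin (d n)) ℝ)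
    (D Dinv : ∀ n : ℕ, Matrix (Fin (d n)) (Fin (d n)) ℝ)
    (hDl : ∀ n : ℕ, Dinv n * D n = 1) (hDr : ∀ n : ℕ, D n * Dinv n = 1)
    (hcond : ∀ n : ℕ, n + 1 < N →
      (D (n + 1) * (D (n + 1))ᵀ) * (Lp n)ᵀ = Lm n * (D n * (D n)ᵀ)) :
    (blockDiag' N d Dinv * blockTri N d Lp Lm * blockDiag' N d D)ᵀ =
      -(blockDiag' N d Dinv * blockTri N d Lp Lm * blockDiag' N d D) := by
  have key : ∀ n : ℕ, n + 1 < N →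
      Dinv (n + 1) * Lm n * D n = (Dinv n * Lp n * D (n + 1))ᵀ := by
    intro n hn
    have hDt : ∀ k, (D k)ᵀ * (Dinv k)ᵀ = 1 := fun k => by
      rw [← transpose_mul, hDl k, transpose_one]
    have e : Dinv (n+1) * ((D (n+1) * (D (n+1))ᵀ) * (Lp n)ᵀ) * (Dinv n)ᵀ
         = Dinv (n+1) * (Lm n * (D n * (D n)ᵀ)) * (Dinv n)ᵀ := by rw [hcond n hn]
    simp only [← Matrix.mul_assoc] at e
    rw [hDl, one_mul] at e
    rw [Matrix.mul_assoc (Dinv (n+1) * Lm n * D n) (D n)ᵀ (Dinv n)ᵀ, hDt, Matrix.mul_one] at e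
    rw [← e, transpose_mul, transpose_mul, ← Matrix.mul_assoc]
  ext x y
  simp only [transpose_apply, Matrix.neg_apply]
  obtain ⟨⟨nx, hnx⟩, ix⟩ := x
  obtain ⟨⟨ny, hny⟩, jy⟩ := y
  rw [triple_apply, triple_apply]
  by_cases h1 : ny = nx + 1
  · subst h1
    have hk := congrFun (congrFun (key nx hny) jy) ix
    simp only [Matrix.mul_apply, transpose_apply] at hk
    simp [blockTri]
    rw [dif_neg (by omega : ¬ nx = nx + 1 + 1)]
    exact hk
  · by_cases h2 : nx = ny + 1
    · subst h2
      have hk := congrFun (congrFun (key ny hnx) ix) jy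
      simp only [Matrix.mul_apply, transpose_apply] at hk
      simp [blockTri]
      rw [dif_neg h1]
      exact hk.symm
    · simp only [blockTri]
      simp [blockTri, h1, h2]
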